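/- Let |T| be a binomial random variable, the number of successes among N independent Bernoulli(p) trials with E|T| = pN ≥ 4(β+1)log N, and let n ≤ (β+1)log N be a positive integer with λ := n/(pN) ≤ 1/4. Then E[|T|^{n+1}] ≤ 1.15^{n+1} (pN)^{n+1}. -/

import Mathlib

open Finset

/-- `k * (k)_i = (k)_{i+1} + i * (k)_i` in ℕ. -/
lemma desc_step (k i : ℕ) :
    k * k.descFactorial i = k.descFactorial (i + 1) + i * k.descFactorial i := by
  rcases le_or_gt i k with h | h
  · rw [Nat.descFactorial_succ, ← Nat.add_mul, Nat.sub_add_cancel h]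
  · rw [Nat.descFactorial_eq_zero_iff_lt.2 h,
      Nat.descFactorial_eq_zero_iff_lt.2 (h.trans (Nat.lt_succ_self i))]
    simp

/-- `C(N,k) * (k)_i = (N)_i * C(N-i, k-i)` for `i ≤ k ≤ N`. -/
lemma choose_desc (N k i : ℕ) (hik : i ≤ k) (hkN : k ≤ N) :
    N.choose k * k.descFactorial i = N.descFactorial i * (N - i).choose (k - i) := by
  rw [Nat.descFactorial_eq_factorial_mul_choose k i,
    Nat.descFactorial_eq_factorial_mul_choose N i, ← Nat.mul_assoc,
    Nat.mul_comm (N.choose k) i.factorial, Nat.mul_assoc, Nat.mul_assoc,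
    Nat.choose_mul hik]

/-- Falling moments of the binomial. -/
lemma falling_moment (q : ℝ) (hq0 : 0 ≤ q) (hq1 : q ≤ 1) (N i : ℕ) :
    ∑ k ∈ range (N + 1), (N.choose k : ℝ) * q ^ k * (1 - q) ^ (N - k) * (k.descFactorial i)
      ≤ q ^ i * (N.descFactorial i) := by
  have hr0 : (0:ℝ) ≤ 1 - q := by linarith
  rcases le_or_gt i N with hiN | hiN
  · have key : ∑ k ∈ range (N + 1), (N.choose k : ℝ) * q ^ k * (1 - q) ^ (N - k) * (k.descFactorial i)
        = ∑ k ∈ Ico i (N + 1), (N.choose k : ℝ) * q ^ k * (1 - q) ^ (N - k) * (k.descFactorial i) := by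
      rw [range_eq_Ico]
      refine (Finset.sum_subset (Finset.Ico_subset_Ico (Nat.zero_le i) le_rfl) ?_).symm
      intro k hk hk2
      simp only [mem_Ico] at hk hk2
      have : k < i := by omega
      rw [Nat.descFactorial_eq_zero_iff_lt.2 this]
      simp
    rw [key, Finset.sum_Ico_eq_sum_range]
    have hNi : N + 1 - i = (N - i) + 1 := by omega
    rw [hNi]
    have congr1 : ∀ t ∈ range ((N - i) + 1),
        (N.choose (i + t) : ℝ) * q ^ (i + t) * (1 - q) ^ (N - (i + t)) * ((i + t).descFactorial i)
        = (q ^ i * (N.descFactorial i)) * (q ^ t * (1 - q) ^ ((N - i) - t) * ((N - i).choose t)) := by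
      intro t ht
      simp only [mem_range] at ht
      have h1 : i + t ≤ N := by omega
      have h2 := choose_desc N (i + t) i (Nat.le_add_right i t) h1
      have h2' : (N.choose (i + t) : ℝ) * ((i + t).descFactorial i)
          = (N.descFactorial i : ℝ) * ((N - i).choose t) := by
        have := congrArg (Nat.cast : ℕ → ℝ) h2
        push_cast at this
        simpa [Nat.add_sub_cancel_left] using this
      have h3 : N - (i + t) = (N - i) - t := by omega
      rw [h3, pow_add]
      linear_combination (q ^ i * q ^ t * (1 - q) ^ ((N - i) - t)) * h2'
    rw [Finset.sum_congr rfl congr1, ← Finset.mul_sum]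
    have hbin : ∑ t ∈ range ((N - i) + 1),
        q ^ t * (1 - q) ^ ((N - i) - t) * ((N - i).choose t : ℝ) = 1 := by
      rw [← add_pow]
      norm_num
    rw [hbin, mul_one]
  · have hz : ∀ k ∈ range (N + 1),
        (N.choose k : ℝ) * q ^ k * (1 - q) ^ (N - k) * (k.descFactorial i) = 0 := by
      intro k hk
      simp only [mem_range] at hk
      rw [Nat.descFactorial_eq_zero_iff_lt.2 (by omega)]
      simp
    rw [Finset.sum_congr rfl hz]
    simp only [Finset.sum_const_zero]
    positivity

/-- Falling moments of the binomial, crude form. -/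
lemma falling_moment' (q : ℝ) (hq0 : 0 ≤ q) (hq1 : q ≤ 1) (N i : ℕ) :
    ∑ k ∈ range (N + 1), (N.choose k : ℝ) * q ^ k * (1 - q) ^ (N - k) * (k.descFactorial i)
      ≤ (q * N) ^ i := by
  refine (falling_moment q hq0 hq1 N i).trans ?_
  rw [mul_pow]
  refine mul_le_mul_of_nonneg_left ?_ (by positivity)
  exact_mod_cast Nat.cast_le.2 (Nat.descFactorial_le_pow N i)

/-- Key induction: mixed power/falling moments of the binomial. -/
lemma moment_rec (q : ℝ) (hq0 : 0 ≤ q) (hq1 : q ≤ 1) (N : ℕ) (hc : 0 < q * (N : ℝ)) (m : ℕ) :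
    ∀ i : ℕ, ∑ k ∈ range (N + 1),
        (N.choose k : ℝ) * q ^ k * (1 - q) ^ (N - k) * ((k : ℝ) ^ m * (k.descFactorial i : ℝ))
      ≤ (q * N) ^ (m + i) *
        Real.exp (((m : ℝ) * ((m : ℝ) - 1) / 2 + (m : ℝ) * (i : ℝ)) / (q * N)) := by
  induction m with
  | zero =>
    intro i
    have h0 : (((0 : ℕ) : ℝ) * (((0 : ℕ) : ℝ) - 1) / 2 + ((0 : ℕ) : ℝ) * (i : ℝ)) / (q * N) = 0 := by
      norm_num
    rw [h0, Real.exp_zero, mul_one, Nat.zero_add]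
    simpa using falling_moment' q hq0 hq1 N i
  | succ m ih =>
    intro i
    set c : ℝ := q * (N : ℝ) with hc_def
    have hcne : c ≠ 0 := hc.ne'
    set E0 : ℝ := ((m : ℝ) * ((m : ℝ) - 1) / 2 + (m : ℝ) * (i : ℝ)) / c with hE0
    have hpt : ∀ k ∈ range (N + 1),
        (N.choose k : ℝ) * q ^ k * (1 - q) ^ (N - k) * ((k : ℝ) ^ (m + 1) * (k.descFactorial i : ℝ))
        = (N.choose k : ℝ) * q ^ k * (1 - q) ^ (N - k) *
            ((k : ℝ) ^ m * (k.descFactorial (i + 1) : ℝ))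
          + (i : ℝ) * ((N.choose k : ℝ) * q ^ k * (1 - q) ^ (N - k) *
            ((k : ℝ) ^ m * (k.descFactorial i : ℝ))) := by
      intro k _
      have h' : (k : ℝ) * (k.descFactorial i : ℝ)
          = (k.descFactorial (i + 1) : ℝ) + (i : ℝ) * (k.descFactorial i : ℝ) := by
        exact_mod_cast desc_step k i
      linear_combination ((N.choose k : ℝ) * q ^ k * (1 - q) ^ (N - k) * (k : ℝ) ^ m) * h'
    rw [Finset.sum_congr rfl hpt, Finset.sum_add_distrib, ← Finset.mul_sum]
    have A := ih (i + 1)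
    have B := ih i
    have eA : (((m : ℝ) * ((m : ℝ) - 1) / 2 + (m : ℝ) * ((i + 1 : ℕ) : ℝ)) / c)
        = E0 + (m : ℝ) / c := by
      rw [hE0]
      push_cast
      field_simp
      ring
    have eT : ((((m + 1 : ℕ)) : ℝ) * ((((m + 1 : ℕ)) : ℝ) - 1) / 2
          + (((m + 1 : ℕ)) : ℝ) * (i : ℝ)) / c
        = E0 + ((m : ℝ) + (i : ℝ)) / c := by
      rw [hE0]
      push_cast
      field_simp
      ring
    rw [eT]
    have hm : m + (i + 1) = m + i + 1 := by omega
    rw [eA, hm] at A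
    have hBB : (i : ℝ) * (∑ k ∈ range (N + 1),
          (N.choose k : ℝ) * q ^ k * (1 - q) ^ (N - k) * ((k : ℝ) ^ m * (k.descFactorial i : ℝ)))
        ≤ (i : ℝ) * (c ^ (m + i) * Real.exp E0) :=
      mul_le_mul_of_nonneg_left B (Nat.cast_nonneg i)
    have hkey : c ^ (m + i + 1) * Real.exp (E0 + (m : ℝ) / c)
          + (i : ℝ) * (c ^ (m + i) * Real.exp E0)
        ≤ c ^ (m + 1 + i) * Real.exp (E0 + ((m : ℝ) + (i : ℝ)) / c) := by
      have em1 : (1 : ℝ) ≤ Real.exp ((m : ℝ) / c) := Real.one_le_exp (by positivity)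
      have hi2 : (1 : ℝ) + (i : ℝ) / c ≤ Real.exp ((i : ℝ) / c) := by
        have := Real.add_one_le_exp ((i : ℝ) / c)
        linarith
      have hsplit : Real.exp (E0 + ((m : ℝ) + (i : ℝ)) / c)
          = Real.exp E0 * (Real.exp ((m : ℝ) / c) * Real.exp ((i : ℝ) / c)) := by
        rw [← Real.exp_add, ← Real.exp_add]
        congr 1
        field_simp
      have hsplit2 : Real.exp (E0 + (m : ℝ) / c)
          = Real.exp E0 * Real.exp ((m : ℝ) / c) := by rw [← Real.exp_add]
      rw [hsplit, hsplit2]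
      have hstep : c * Real.exp ((m : ℝ) / c) + (i : ℝ)
          ≤ c * (Real.exp ((m : ℝ) / c) * Real.exp ((i : ℝ) / c)) := by
        have h1 : c * (Real.exp ((m : ℝ) / c) * ((1 : ℝ) + (i : ℝ) / c))
            = c * Real.exp ((m : ℝ) / c) + (i : ℝ) * Real.exp ((m : ℝ) / c) := by
          field_simp
        have h2 : c * (Real.exp ((m : ℝ) / c) * ((1 : ℝ) + (i : ℝ) / c))
            ≤ c * (Real.exp ((m : ℝ) / c) * Real.exp ((i : ℝ) / c)) := by
          refine mul_le_mul_of_nonneg_left ?_ hc.le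
          exact mul_le_mul_of_nonneg_left hi2 (Real.exp_pos _).le
        have h3 : (i : ℝ) ≤ (i : ℝ) * Real.exp ((m : ℝ) / c) :=
          le_mul_of_one_le_right (Nat.cast_nonneg i) em1
        linarith
      have hpowpos : (0 : ℝ) < c ^ (m + i) := pow_pos hc (m + i)
      have hE0pos : (0 : ℝ) < Real.exp E0 := Real.exp_pos _
      have expand : c ^ (m + i + 1) * (Real.exp E0 * Real.exp ((m : ℝ) / c))
            + (i : ℝ) * (c ^ (m + i) * Real.exp E0)
          = (c ^ (m + i) * Real.exp E0) * (c * Real.exp ((m : ℝ) / c) + (i : ℝ)) := by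
        ring
      have expand2 : c ^ (m + 1 + i) *
            (Real.exp E0 * (Real.exp ((m : ℝ) / c) * Real.exp ((i : ℝ) / c)))
          = (c ^ (m + i) * Real.exp E0) *
            (c * (Real.exp ((m : ℝ) / c) * Real.exp ((i : ℝ) / c))) := by
        have : m + 1 + i = m + i + 1 := by omega
        rw [this]
        ring
      rw [expand, expand2]
      exact mul_le_mul_of_nonneg_left hstep (by positivity)
    calc _ ≤ c ^ (m + i + 1) * Real.exp (E0 + (m : ℝ) / c)
            + (i : ℝ) * (c ^ (m + i) * Real.exp E0) := add_le_add A hBB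
      _ ≤ _ := hkey


lemma exp_eighth_le : Real.exp (1 / 8 : ℝ) ≤ 1.15 := by
  have h8 : Real.exp (1 / 8 : ℝ) ^ (8 : ℕ) = Real.exp 1 := by
    rw [← Real.exp_nat_mul]
    norm_num
  have h1 : Real.exp (1 / 8 : ℝ) ^ (8 : ℕ) ≤ (1.15 : ℝ) ^ (8 : ℕ) := by
    rw [h8]
    calc Real.exp 1 ≤ 2.7182818286 := Real.exp_one_lt_d9.le
      _ ≤ (1.15 : ℝ) ^ (8 : ℕ) := by norm_num
  exact le_of_pow_le_pow_left₀ (by norm_num) (by norm_num) h1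

theorem stmt_19 (N : ℕ) (p : ENNReal) (hp : p ≤ 1) (β : ℝ)
    (hmean : 4 * (β + 1) * Real.log N ≤ p.toReal * N)
    (n : ℕ) (hn : 0 < n) (hnlog : (n : ℝ) ≤ (β + 1) * Real.log N)
    (hlam : (n : ℝ) / (p.toReal * N) ≤ 1 / 4) :
    ∑ k : Fin (N + 1), ((PMF.binomial p.toNNReal (by simpa using ENNReal.toNNReal_mono ENNReal.one_ne_top hp) N) k).toReal * ((k : ℕ) : ℝ) ^ (n + 1)
      ≤ 1.15 ^ (n + 1) * (p.toReal * N) ^ (n + 1) := by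
  set q : ℝ := p.toReal with hq_def
  have hq0 : 0 ≤ q := ENNReal.toReal_nonneg
  have hq1 : q ≤ 1 := by
    simpa using ENNReal.toReal_mono ENNReal.one_ne_top hp
  have hβ1 : (1 : ℝ) ≤ (β + 1) * Real.log N := by
    calc (1 : ℝ) ≤ (n : ℝ) := by exact_mod_cast hn
      _ ≤ (β + 1) * Real.log N := hnlog
  have hc4 : (4 : ℝ) ≤ q * N := by nlinarith
  have hc : (0 : ℝ) < q * N := by linarith
  have hpt : p ≠ ⊤ := ne_top_of_le_ne_top ENNReal.one_ne_top hp
  -- rewrite the PMF values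
  have hterm : ∀ k : Fin (N + 1),
      ((PMF.binomial p.toNNReal (by simpa using ENNReal.toNNReal_mono ENNReal.one_ne_top hp) N) k).toReal * ((k : ℕ) : ℝ) ^ (n + 1)
      = (N.choose (k : ℕ) : ℝ) * q ^ (k : ℕ) * (1 - q) ^ (N - (k : ℕ)) *
          (((k : ℕ) : ℝ) ^ (n + 1) * ((k : ℕ).descFactorial 0 : ℝ)) := by
    intro k
    erw [PMF.binomial_apply]
    rw [ENNReal.coe_toNNReal hpt]
    have h1p : (1 - p).toReal = 1 - q := by
      rw [ENNReal.toReal_sub_of_le hp ENNReal.one_ne_top, ENNReal.toReal_one]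
    rw [Fin.val_last, ENNReal.toReal_mul, ENNReal.toReal_mul, ENNReal.toReal_pow, ENNReal.toReal_pow,
      h1p, ENNReal.toReal_natCast]
    simp only [Nat.descFactorial_zero, Nat.cast_one, mul_one]
    ring
  rw [Finset.sum_congr rfl (fun k _ => hterm k)]
  rw [Fin.sum_univ_eq_sum_range (fun k => (N.choose k : ℝ) * q ^ k * (1 - q) ^ (N - k) *
      (((k : ℕ) : ℝ) ^ (n + 1) * ((k : ℕ).descFactorial 0 : ℝ)))]
  have key := moment_rec q hq0 hq1 N hc (n + 1) 0
  have hexp : ((((n + 1 : ℕ)) : ℝ) * ((((n + 1 : ℕ)) : ℝ) - 1) / 2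
        + (((n + 1 : ℕ)) : ℝ) * ((0 : ℕ) : ℝ)) / (q * N)
      ≤ (((n + 1 : ℕ)) : ℝ) * (1 / 8 : ℝ) := by
    push_cast
    have hn4 : (n : ℝ) ≤ q * N / 4 := by
      rw [div_le_div_iff₀ hc (by norm_num)] at hlam
      linarith
    rw [div_le_iff₀ hc]
    nlinarith [Nat.cast_nonneg (α := ℝ) n]
  have hfin : (q * N) ^ (n + 1 + 0) *
        Real.exp (((((n + 1 : ℕ)) : ℝ) * ((((n + 1 : ℕ)) : ℝ) - 1) / 2
          + (((n + 1 : ℕ)) : ℝ) * ((0 : ℕ) : ℝ)) / (q * N))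
      ≤ 1.15 ^ (n + 1) * (q * N) ^ (n + 1) := by
    rw [Nat.add_zero, mul_comm (1.15 ^ (n + 1) : ℝ)]
    refine mul_le_mul_of_nonneg_left ?_ (by positivity)
    calc Real.exp (((((n + 1 : ℕ)) : ℝ) * ((((n + 1 : ℕ)) : ℝ) - 1) / 2
            + (((n + 1 : ℕ)) : ℝ) * ((0 : ℕ) : ℝ)) / (q * N))
        ≤ Real.exp ((((n + 1 : ℕ)) : ℝ) * (1 / 8 : ℝ)) := Real.exp_le_exp.2 hexp
      _ = Real.exp (1 / 8 : ℝ) ^ (n + 1) := Real.exp_nat_mul _ _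
      _ ≤ 1.15 ^ (n + 1) := pow_le_pow_left₀ (Real.exp_pos _).le exp_eighth_le _
  exact le_trans key hfin
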